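/- Let A ⊆ ℝ^d be closed and let X ⊆ ℝ^d be Lebesgue measurable and metrically associated with A. If λ_d(A_t ∩ X) is finite for some t > 0, then the function f(t) := λ_d(A_t ∩ X) is finite for every t > 0 and f has the Kneser property of order d. -/

import Mathlib

open MeasureTheory Metric Set Filter
open scoped Topology ENNReal

noncomputable section

abbrev Euc (d : ℕ) := EuclideanSpace ℝ (Fin d)

open scoped NNReal RealInnerProductSpace


lemma euc_image_equiv (d : ℕ) (s : Set (Euc d)) :
    (⇑(WithLp.equiv 2 (∀ _ : Fin d, ℝ)) '' s : Set (Fin d → ℝ)) = WithLp.toLp 2 ⁻¹' s := by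
  ext x
  constructor
  · rintro ⟨y, hy, rfl⟩; exact hy
  · intro hx; exact ⟨WithLp.toLp 2 x, hx, rfl⟩

lemma volume_pi_eq_volume_euc (d : ℕ) (s : Set (Euc d)) (hs : MeasurableSet s) :
    (volume : Measure (Fin d → ℝ)) (WithLp.toLp 2 ⁻¹' s) = (volume : Measure (Euc d)) s := by
  have h := PiLp.volume_preserving_toLp (Fin d)
  exact h.measure_preimage (s := s) hs.nullMeasurableSet

lemma hausdorff_pi_eq_volume (d : ℕ) :
    (μH[(d:ℝ)] : Measure (Fin d → ℝ)) = volume := by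
  have := hausdorffMeasure_pi_real (ι := Fin d)
  simpa using this

lemma volume_le_hausdorff {d : ℕ} (s : Set (Euc d)) (hs : MeasurableSet s) :
    (volume : Measure (Euc d)) s ≤ (μH[(d:ℝ)] : Measure (Euc d)) s := by
  have h1 : LipschitzWith 1 (⇑(WithLp.equiv 2 (∀ _ : Fin d, ℝ))) :=
    PiLp.lipschitzWith_ofLp 2 _
  have h2 := h1.hausdorffMeasure_image_le (d := (d:ℝ)) (Nat.cast_nonneg d) s
  rw [euc_image_equiv] at h2
  simp only [ENNReal.coe_one, ENNReal.one_rpow, one_mul] at h2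
  calc (volume : Measure (Euc d)) s
      = (volume : Measure (Fin d → ℝ)) (WithLp.toLp 2 ⁻¹' s) := (volume_pi_eq_volume_euc d s hs).symm
    _ = (μH[(d:ℝ)] : Measure (Fin d → ℝ)) (WithLp.toLp 2 ⁻¹' s) := by rw [hausdorff_pi_eq_volume]
    _ ≤ (μH[(d:ℝ)] : Measure (Euc d)) s := h2

lemma hausdorff_le_vol_aux {d : ℕ} {K : ℝ≥0}
    (h1 : AntilipschitzWith K (⇑(WithLp.equiv 2 (∀ _ : Fin d, ℝ))))
    (s : Set (Euc d)) (hs : MeasurableSet s) :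
    (μH[(d:ℝ)] : Measure (Euc d)) s ≤ (K : ℝ≥0∞) ^ (d:ℝ) * (volume : Measure (Euc d)) s := by
  have h2 := h1.hausdorffMeasure_preimage_le (Nat.cast_nonneg d) (WithLp.toLp 2 ⁻¹' s : Set (Fin d → ℝ))
  have h3 : (⇑(WithLp.equiv 2 (∀ _ : Fin d, ℝ)) ⁻¹' (WithLp.toLp 2 ⁻¹' s) : Set (Euc d)) = s := rfl
  rw [h3, hausdorff_pi_eq_volume, volume_pi_eq_volume_euc d s hs] at h2
  exact h2

lemma hausdorff_le_vol {d : ℕ} : ∃ C : ℝ≥0∞, C ≠ ⊤ ∧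
    ∀ s : Set (Euc d), MeasurableSet s →
      (μH[(d:ℝ)] : Measure (Euc d)) s ≤ C * (volume : Measure (Euc d)) s := by
  have h1 := PiLp.antilipschitzWith_ofLp 2 (fun _ : Fin d => ℝ)
  refine ⟨_, ?_, fun s hs => hausdorff_le_vol_aux h1 s hs⟩
  exact (ENNReal.rpow_lt_top_of_nonneg (Nat.cast_nonneg d) ENNReal.coe_ne_top).ne

instance hausdorff_finiteOnCompacts {d : ℕ} :
    IsFiniteMeasureOnCompacts (μH[(d:ℝ)] : Measure (Euc d)) := by
  obtain ⟨C, hC, h⟩ := hausdorff_le_vol (d := d)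
  constructor
  intro K hK
  calc (μH[(d:ℝ)] : Measure (Euc d)) K ≤ C * volume K := h K hK.measurableSet
    _ < ⊤ := ENNReal.mul_lt_top hC.lt_top hK.measure_lt_top

lemma hausdorff_eq_smul_volume {d : ℕ} : ∃ c : ℝ≥0, 0 < c ∧
    (μH[(d:ℝ)] : Measure (Euc d)) = (c : ℝ≥0∞) • (volume : Measure (Euc d)) := by
  have h := Measure.isAddLeftInvariant_eq_smul (μH[(d:ℝ)] : Measure (Euc d))
    (volume : Measure (Euc d))
  refine ⟨_, ?_, by exact_mod_cast h⟩
  by_contra hc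
  push_neg at hc
  have hc0 : Measure.addHaarScalarFactor (μH[(d:ℝ)] : Measure (Euc d)) volume = 0 :=
    le_antisymm hc zero_le
  have hb := volume_le_hausdorff (d := d) (s := Metric.ball 0 1) measurableSet_ball
  rw [h, hc0] at hb
  simp at hb
  have := measure_ball_pos (volume : Measure (Euc d)) (0 : Euc d) one_pos
  rw [hb] at this
  exact lt_irrefl _ this

lemma seg_ineq {d : ℕ} (u v w : Euc d) {lam : ℝ} (hlam : 1 ≤ lam)
    (h1 : ‖u‖ ≤ ‖u + w‖) (h2 : ‖v‖ ≤ ‖v - w‖) :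
    ‖u - v + w‖ ≤ ‖(u - v) + lam • w‖ := by
  rw [← Real.sqrt_sq (norm_nonneg (u - v + w)), ← Real.sqrt_sq (norm_nonneg ((u - v) + lam • w))]
  apply Real.sqrt_le_sqrt
  have e1 : ‖(u - v) + w‖ ^ 2 = ‖u - v‖ ^ 2 + 2 * ⟪u - v, w⟫ + ‖w‖ ^ 2 :=
    norm_add_sq_real _ _
  have e2 : ‖(u - v) + lam • w‖ ^ 2
      = ‖u - v‖ ^ 2 + 2 * (lam * ⟪u - v, w⟫) + (lam * ‖w‖) ^ 2 := by
    rw [norm_add_sq_real, real_inner_smul_right, norm_smul, Real.norm_eq_abs,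
      abs_of_nonneg (by linarith : (0:ℝ) ≤ lam)]
  have c1 : (0:ℝ) ≤ 2 * ⟪u, w⟫ + ‖w‖ ^ 2 := by
    have := norm_add_sq_real u w
    nlinarith [norm_nonneg u, norm_nonneg (u + w)]
  have c2 : 2 * ⟪v, w⟫ ≤ ‖w‖ ^ 2 := by
    have := norm_sub_sq_real v w
    nlinarith [norm_nonneg v, norm_nonneg (v - w)]
  have hiw : ⟪u - v, w⟫ = ⟪u, w⟫ - ⟪v, w⟫ := inner_sub_left u v w
  have hw : (0:ℝ) ≤ ‖w‖ ^ 2 := sq_nonneg _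
  rw [e1, e2]
  nlinarith [mul_nonneg (sub_nonneg.2 hlam)
    (by nlinarith : (0:ℝ) ≤ 2 * ⟪u - v, w⟫ + (lam + 1) * ‖w‖ ^ 2)]


/-- `X` is metrically associated with `A`. -/
def metricallyAssociated {d : ℕ} (A X : Set (Euc d)) : Prop :=
  ∀ x ∈ X, ∃ a ∈ closure A, dist x a = Metric.infDist x A ∧ openSegment ℝ x a ⊆ X


lemma key {d : ℕ} (A X : Set (Euc d)) (hA : IsClosed A) (hma : metricallyAssociated A X)
    {lam a b : ℝ} (hlam : 1 < lam) (ha : 0 < a) (hab : a ≤ b) :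
    volume ((thickening (lam*b) A ∩ X) \ thickening (lam*a) A) ≤
      ENNReal.ofReal lam ^ d * volume ((thickening b A ∩ X) \ thickening a A) := by
  classical
  set Sl := (thickening (lam*b) A ∩ X) \ thickening (lam*a) A with hSl
  set S := (thickening b A ∩ X) \ thickening a A with hS
  rcases Sl.eq_empty_or_nonempty with hemp | ⟨y0, hy0⟩
  · rw [hemp]; simp
  have hlam0 : (0:ℝ) < lam := lt_trans one_pos hlam
  have hinv0 : (0:ℝ) < lam⁻¹ := inv_pos.2 hlam0
  have hinv1 : lam⁻¹ < 1 := inv_lt_one_of_one_lt₀ hlam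
  -- A is nonempty
  have hAne : A.Nonempty := by
    obtain ⟨z, hz, -⟩ := Metric.mem_thickening_iff.1 hy0.1.1
    exact ⟨z, hz⟩
  -- the foot point map
  set p : Euc d → Euc d := fun y => if h : y ∈ X then (hma y h).choose else y with hp
  have hp_eq : ∀ y (hy : y ∈ X), p y = (hma y hy).choose := by
    intro y hy
    rw [hp]
    exact dif_pos hy
  have hp_mem : ∀ y ∈ X, p y ∈ A := by
    intro y hy
    rw [hp_eq y hy]
    exact hA.closure_subset (hma y hy).choose_spec.1
  have hp_dist : ∀ y ∈ X, dist y (p y) = infDist y A := by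
    intro y hy
    rw [hp_eq y hy]
    exact (hma y hy).choose_spec.2.1
  have hp_seg : ∀ y ∈ X, openSegment ℝ y (p y) ⊆ X := by
    intro y hy
    rw [hp_eq y hy]
    exact (hma y hy).choose_spec.2.2
  -- the contraction map
  set Ψ : Euc d → Euc d := fun y => lam⁻¹ • y + (1 - lam⁻¹) • p y with hΨ
  -- facts about points of Sl
  have hmem : ∀ y ∈ Sl, y ∈ X ∧ lam * a ≤ infDist y A ∧ infDist y A < lam * b := by
    rintro y ⟨⟨hyb, hyX⟩, hya⟩
    refine ⟨hyX, ?_, (mem_thickening_iff_infDist_lt hAne).1 hyb⟩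
    by_contra h
    exact hya ((mem_thickening_iff_infDist_lt hAne).2 (not_le.1 h))
  have hinfΨ : ∀ y ∈ Sl, infDist (Ψ y) A = lam⁻¹ * infDist y A := by
    intro y hy
    obtain ⟨hyX, hya, hyb⟩ := hmem y hy
    have hd1 : Ψ y - p y = lam⁻¹ • (y - p y) := by
      simp only [hΨ]; module
    have hd2 : y - Ψ y = (1 - lam⁻¹) • (y - p y) := by
      simp only [hΨ]; module
    have hdist1 : dist (Ψ y) (p y) = lam⁻¹ * infDist y A := by
      rw [dist_eq_norm, hd1, norm_smul, Real.norm_eq_abs, abs_of_pos hinv0,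
        ← dist_eq_norm, hp_dist y hyX]
    have hdist2 : dist y (Ψ y) = (1 - lam⁻¹) * infDist y A := by
      rw [dist_eq_norm, hd2, norm_smul, Real.norm_eq_abs,
        abs_of_nonneg (by linarith : (0:ℝ) ≤ 1 - lam⁻¹), ← dist_eq_norm, hp_dist y hyX]
    have hle : infDist (Ψ y) A ≤ lam⁻¹ * infDist y A :=
      hdist1 ▸ infDist_le_dist_of_mem (hp_mem y hyX)
    have hge : lam⁻¹ * infDist y A ≤ infDist (Ψ y) A := by
      have := infDist_le_infDist_add_dist (x := y) (y := Ψ y) (s := A)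
      rw [hdist2] at this
      linarith
    linarith
  have hΨS : ∀ y ∈ Sl, Ψ y ∈ S := by
    intro y hy
    obtain ⟨hyX, hya, hyb⟩ := hmem y hy
    have hne : y ≠ p y := by
      intro h
      have : dist y (p y) = 0 := by rw [← h]; simp
      rw [hp_dist y hyX] at this
      nlinarith
    have hXmem : Ψ y ∈ X := by
      apply hp_seg y hyX
      exact ⟨lam⁻¹, 1 - lam⁻¹, hinv0, by linarith, by ring, rfl⟩
    have hinf := hinfΨ y hy
    refine ⟨⟨(mem_thickening_iff_infDist_lt hAne).2 ?_, hXmem⟩, ?_⟩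
    · rw [hinf]
      calc lam⁻¹ * infDist y A < lam⁻¹ * (lam * b) := by
            apply mul_lt_mul_of_pos_left hyb hinv0
        _ = b := by field_simp
    · intro hmem'
      have := (mem_thickening_iff_infDist_lt hAne).1 hmem'
      rw [hinf] at this
      have : lam⁻¹ * (lam * a) ≤ lam⁻¹ * infDist y A :=
        mul_le_mul_of_nonneg_left hya (le_of_lt hinv0)
      have heq : lam⁻¹ * (lam * a) = a := by field_simp
      linarith [(mem_thickening_iff_infDist_lt hAne).1 hmem', heq ▸ this]
  -- co-Lipschitz property
  have hcoLip : ∀ y ∈ Sl, ∀ y' ∈ Sl, dist y y' ≤ lam * dist (Ψ y) (Ψ y') := by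
    intro y hy y' hy'
    obtain ⟨hyX, hya, hyb⟩ := hmem y hy
    obtain ⟨hy'X, hy'a, hy'b⟩ := hmem y' hy'
    have h1 : ‖y - p y‖ ≤ ‖(y - p y) + (p y - p y')‖ := by
      have e : (y - p y) + (p y - p y') = y - p y' := by abel
      rw [e, ← dist_eq_norm, ← dist_eq_norm, hp_dist y hyX]
      exact infDist_le_dist_of_mem (hp_mem y' hy'X)
    have h2 : ‖y' - p y'‖ ≤ ‖(y' - p y') - (p y - p y')‖ := by
      have e : (y' - p y') - (p y - p y') = y' - p y := by abel
      rw [e, ← dist_eq_norm, ← dist_eq_norm, hp_dist y' hy'X]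
      exact infDist_le_dist_of_mem (hp_mem y hyX)
    have e1 : y - y' = (y - p y) - (y' - p y') + (p y - p y') := by abel
    have e2 : Ψ y - Ψ y' =
        lam⁻¹ • (((y - p y) - (y' - p y')) + lam • (p y - p y')) := by
      have hll : lam⁻¹ * lam = 1 := inv_mul_cancel₀ (ne_of_gt hlam0)
      simp only [hΨ]
      rw [smul_add, smul_smul, hll, one_smul]
      module
    rw [dist_eq_norm, dist_eq_norm, e1, e2, norm_smul, Real.norm_eq_abs, abs_of_pos hinv0]
    rw [← mul_assoc, mul_inv_cancel₀ (ne_of_gt hlam0), one_mul]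
    exact seg_ineq (y - p y) (y' - p y') (p y - p y') (le_of_lt hlam) h1 h2
  -- injectivity and the Lipschitz inverse
  have hinj : InjOn Ψ Sl := by
    intro y hy y' hy' heq
    have := hcoLip y hy y' hy'
    rw [heq, dist_self, mul_zero] at this
    exact dist_le_zero.1 this
  have hgimg : Function.invFunOn Ψ Sl '' (Ψ '' Sl) = Sl :=
    hinj.invFunOn_image (subset_refl _)
  have hlip : LipschitzOnWith lam.toNNReal (Function.invFunOn Ψ Sl) (Ψ '' Sl) := by
    rw [lipschitzOnWith_iff_dist_le_mul]
    rintro z ⟨y, hy, rfl⟩ z' ⟨y', hy', rfl⟩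
    rw [hinj.leftInvOn_invFunOn hy, hinj.leftInvOn_invFunOn hy',
      Real.coe_toNNReal lam (le_of_lt hlam0)]
    exact hcoLip y hy y' hy'
  -- conclude via Hausdorff measure
  obtain ⟨c, hc, hEq⟩ := hausdorff_eq_smul_volume (d := d)
  have app : ∀ s : Set (Euc d), (μH[(d:ℝ)] : Measure (Euc d)) s = (c : ℝ≥0∞) * volume s := by
    intro s
    rw [hEq, Measure.smul_apply, smul_eq_mul]
  have chain : (μH[(d:ℝ)] : Measure (Euc d)) Sl
      ≤ (lam.toNNReal : ℝ≥0∞) ^ (d:ℝ) * (μH[(d:ℝ)] : Measure (Euc d)) S := by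
    calc (μH[(d:ℝ)] : Measure (Euc d)) Sl
        = (μH[(d:ℝ)] : Measure (Euc d)) (Function.invFunOn Ψ Sl '' (Ψ '' Sl)) := by
          rw [hgimg]
      _ ≤ (lam.toNNReal : ℝ≥0∞) ^ (d:ℝ) * (μH[(d:ℝ)] : Measure (Euc d)) (Ψ '' Sl) :=
          hlip.hausdorffMeasure_image_le (Nat.cast_nonneg d)
      _ ≤ (lam.toNNReal : ℝ≥0∞) ^ (d:ℝ) * (μH[(d:ℝ)] : Measure (Euc d)) S := by
          gcongr
          exact image_subset_iff.2 fun y hy => hΨS y hy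
  rw [app, app] at chain
  have hKey : (lam.toNNReal : ℝ≥0∞) ^ (d:ℝ) = ENNReal.ofReal lam ^ d := by
    rw [ENNReal.rpow_natCast]
    rfl
  rw [hKey] at chain
  have : (c:ℝ≥0∞) * volume Sl ≤ (c:ℝ≥0∞) * (ENNReal.ofReal lam ^ d * volume S) := by
    calc (c:ℝ≥0∞) * volume Sl ≤ ENNReal.ofReal lam ^ d * ((c:ℝ≥0∞) * volume S) := chain
      _ = (c:ℝ≥0∞) * (ENNReal.ofReal lam ^ d * volume S) := by ring
  exact (ENNReal.mul_le_mul_iff_right (by exact_mod_cast hc.ne') ENNReal.coe_ne_top).1 this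

/-- Lemma 2.4 (Stachó/Kneser): if `X` is measurable and metrically associated with the
closed set `A` and the local parallel volume `λ_d(A_t ∩ X)` is finite for some `t > 0`,
then it is finite for all `t > 0` and `f(t) := λ_d(A_t ∩ X)` has the Kneser property
of order `d`. -/
theorem kneser_of_metricallyAssociated {d : ℕ} (A X : Set (Euc d))
    (hA : IsClosed A) (hX : MeasurableSet X) (hma : metricallyAssociated A X)
    (hfin : ∃ t > (0:ℝ), volume (Metric.thickening t A ∩ X) ≠ ⊤) :
    (∀ t > (0:ℝ), volume (Metric.thickening t A ∩ X) ≠ ⊤) ∧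
    (∀ lam : ℝ, 1 ≤ lam → ∀ a b : ℝ, 0 < a → a ≤ b →
      (volume (Metric.thickening (lam * b) A ∩ X)).toReal -
          (volume (Metric.thickening (lam * a) A ∩ X)).toReal ≤
        lam ^ d * ((volume (Metric.thickening b A ∩ X)).toReal -
          (volume (Metric.thickening a A ∩ X)).toReal)) := by
  obtain ⟨t₀, ht₀, hfin₀⟩ := hfin
  have hmono : ∀ s t : ℝ, s ≤ t →
      volume (thickening s A ∩ X) ≤ volume (thickening t A ∩ X) :=
    fun s t hst => measure_mono (inter_subset_inter_left X (thickening_mono hst A))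
  have hdiff_eq : ∀ s t : ℝ, (thickening t A ∩ X) \ thickening s A
      = (thickening t A ∩ X) \ (thickening s A ∩ X) := by
    intro s t
    ext z
    simp only [mem_diff, mem_inter_iff]
    tauto
  have step : ∀ s : ℝ, 0 < s → volume (thickening s A ∩ X) ≠ ⊤ →
      volume (thickening (2*s) A ∩ X) ≠ ⊤ := by
    intro s hs hfs
    have hk := key A X hA hma (lam := 2) (a := s/2) (b := s) one_lt_two (by linarith)
      (by linarith)
    rw [show 2*(s/2) = s by ring] at hk
    have h1 : volume ((thickening (2*s) A ∩ X) \ thickening s A) ≠ ⊤ :=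
      ne_top_of_le_ne_top
        (ENNReal.mul_ne_top (ENNReal.pow_ne_top ENNReal.ofReal_ne_top)
          (ne_top_of_le_ne_top hfs (measure_mono diff_subset))) hk
    have h2 : thickening (2*s) A ∩ X ⊆
        (thickening s A ∩ X) ∪ ((thickening (2*s) A ∩ X) \ thickening s A) := by
      intro z hz
      by_cases h : z ∈ thickening s A
      · exact Or.inl ⟨h, hz.2⟩
      · exact Or.inr ⟨hz, h⟩
    exact ne_top_of_le_ne_top (ENNReal.add_ne_top.2 ⟨hfs, h1⟩)
      ((measure_mono h2).trans (measure_union_le _ _))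
  have part1 : ∀ t > (0:ℝ), volume (thickening t A ∩ X) ≠ ⊤ := by
    have hn : ∀ n : ℕ, volume (thickening (2^n * t₀) A ∩ X) ≠ ⊤ := by
      intro n
      induction n with
      | zero => simpa using hfin₀
      | succ n ih =>
        have h := step (2^n * t₀) (by positivity) ih
        rw [show 2*(2^n*t₀) = 2^(n+1)*t₀ by ring] at h
        exact h
    intro t ht
    obtain ⟨n, hn'⟩ := pow_unbounded_of_one_lt (t / t₀) one_lt_two
    have hle : t ≤ 2^n * t₀ := by
      rw [div_lt_iff₀ ht₀] at hn'
      linarith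
    exact ne_top_of_le_ne_top (hn n) (hmono t _ hle)
  refine ⟨part1, ?_⟩
  intro lam hlam a b ha hab
  have hb : 0 < b := lt_of_lt_of_le ha hab
  rcases eq_or_lt_of_le hlam with h1 | hlam1
  · subst h1
    simp only [one_mul, one_pow]
    exact le_refl _
  · have hlam0 : (0:ℝ) < lam := lt_trans one_pos hlam1
    have hk := key A X hA hma hlam1 ha hab
    have hsub : thickening a A ∩ X ⊆ thickening b A ∩ X :=
      inter_subset_inter_left X (thickening_mono hab A)
    have hsubl : thickening (lam*a) A ∩ X ⊆ thickening (lam*b) A ∩ X :=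
      inter_subset_inter_left X
        (thickening_mono (mul_le_mul_of_nonneg_left hab (le_of_lt hlam0)) A)
    have hfa : volume (thickening a A ∩ X) ≠ ⊤ := part1 a ha
    have hfb : volume (thickening b A ∩ X) ≠ ⊤ := part1 b hb
    have hfla : volume (thickening (lam*a) A ∩ X) ≠ ⊤ := part1 _ (by positivity)
    have hflb : volume (thickening (lam*b) A ∩ X) ≠ ⊤ := part1 _ (by positivity)
    have hmsa : MeasurableSet (thickening a A ∩ X) := isOpen_thickening.measurableSet.inter hX
    have hmsla : MeasurableSet (thickening (lam*a) A ∩ X) :=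
      isOpen_thickening.measurableSet.inter hX
    have hda : volume ((thickening b A ∩ X) \ (thickening a A ∩ X))
        = volume (thickening b A ∩ X) - volume (thickening a A ∩ X) :=
      measure_diff hsub hmsa.nullMeasurableSet hfa
    have hdl : volume ((thickening (lam*b) A ∩ X) \ (thickening (lam*a) A ∩ X))
        = volume (thickening (lam*b) A ∩ X) - volume (thickening (lam*a) A ∩ X) :=
      measure_diff hsubl hmsla.nullMeasurableSet hfla
    have hk' : volume ((thickening (lam*b) A ∩ X) \ (thickening (lam*a) A ∩ X)) ≤
        ENNReal.ofReal lam ^ d *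
          volume ((thickening b A ∩ X) \ (thickening a A ∩ X)) := by
      rw [← hdiff_eq, ← hdiff_eq]
      exact hk
    have hRfin : ENNReal.ofReal lam ^ d *
        volume ((thickening b A ∩ X) \ (thickening a A ∩ X)) ≠ ⊤ :=
      ENNReal.mul_ne_top (ENNReal.pow_ne_top ENNReal.ofReal_ne_top)
        (ne_top_of_le_ne_top hfb (measure_mono diff_subset))
    have hfinal := ENNReal.toReal_mono hRfin hk'
    rw [hda, hdl, ENNReal.toReal_mul, ENNReal.toReal_pow,
      ENNReal.toReal_ofReal (le_of_lt hlam0),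
      ENNReal.toReal_sub_of_le (measure_mono hsub) hfb,
      ENNReal.toReal_sub_of_le (measure_mono hsubl) hflb] at hfinal
    exact hfinal
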